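/- For all positive integers α, m, n, r and every divisor d > 1 of n, the cyclotomic polynomial Φ_d(q) divides ∑_{k=0}^{n-1} [k(k+1)]^r · [2k+1] · q^{(n-1-k)(αm+1)} · w_k^{(α)}(x;q)^m in ℤ[q][x]. -/

import Mathlib

open Polynomial LaurentPolynomial

/-- The Gaussian binomial coefficient as a polynomial in `q` over `ℤ`. -/
noncomputable def qbinom : ℕ → ℕ → Polynomial ℤ
  | _, 0 => 1
  | 0, _ + 1 => 0
  | n + 1, k + 1 => qbinom n k + Polynomial.X ^ (k + 1) * qbinom n (k + 1)

/-- The `q`-integer `[m] = 1 + q + ⋯ + q^{m-1}` in `ℤ[q]`. -/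
noncomputable def qint (m : ℕ) : Polynomial ℤ := ∑ i ∈ Finset.range m, Polynomial.X ^ i

/-- The `q`-integer `[m]` as a Laurent polynomial in `q`. -/
noncomputable def qintL (m : ℕ) : LaurentPolynomial ℤ := (qint m).toLaurent

/-- `qbinom(k-1,j-1)·qbinom(k+j,j) − qbinom(k,j)·qbinom(k+j,j-1)`. -/
noncomputable def qwCoeff (k j : ℕ) : Polynomial ℤ :=
  qbinom (k - 1) (j - 1) * qbinom (k + j) j - qbinom k j * qbinom (k + j) (j - 1)

/-- `w_k^{(α)}(x;q) = ∑_{j=1}^{k} q^{α(C(j+1,2)−(k+1)(j−1))} ·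
(qbinom(k-1,j-1)·qbinom(k+j,j) − qbinom(k,j)·qbinom(k+j,j-1))^α · x^{j-1}`,
a polynomial in `x` with coefficients in `ℤ[q,q⁻¹]` (the exponent of `q` may be negative). -/
noncomputable def qw (α k : ℕ) : Polynomial (LaurentPolynomial ℤ) :=
  ∑ j ∈ Finset.Icc 1 k,
    Polynomial.C (LaurentPolynomial.T ((α : ℤ) * (((j + 1).choose 2 : ℤ) - ((k : ℤ) + 1) * ((j : ℤ) - 1))) *
        ((qwCoeff k j).toLaurent) ^ α) *
      Polynomial.X ^ (j - 1)

/-- For all positive integers `α, m, n, r` and every divisor `d > 1` of `n`, the cyclotomic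
polynomial `Φ_d(q)` divides
`∑_{k=0}^{n-1} [k(k+1)]^r [2k+1] q^{(n-1-k)(αm+1)} w_k^{(α)}(x;q)^m`. -/
lemma qbinom_zero_right (n : ℕ) : qbinom n 0 = 1 := by cases n <;> rfl
lemma qbinom_succ_succ (n k : ℕ) :
    qbinom (n+1) (k+1) = qbinom n k + Polynomial.X ^ (k + 1) * qbinom n (k + 1) := rfl

lemma qbinom_eq_zero : ∀ {n k : ℕ}, n < k → qbinom n k = 0 := by
  intro n
  induction n with
  | zero => intro k hk; match k, hk with | k+1, _ => rfl
  | succ n ih =>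
    intro k hk
    match k, hk with
    | k+1, hk =>
      rw [qbinom_succ_succ, ih (by omega), ih (by omega)]
      ring

lemma qbinom_self (n : ℕ) : qbinom n n = 1 := by
  induction n with
  | zero => rfl
  | succ n ih => rw [qbinom_succ_succ, ih, qbinom_eq_zero (by omega)]; ring

lemma qint_succ (n : ℕ) : qint (n+1) = 1 + Polynomial.X * qint n := by
  rw [qint, qint, geom_sum_succ]; ring

lemma qint_succ' (n : ℕ) : qint (n+1) = Polynomial.X ^ n + qint n := by
  rw [qint, qint, geom_sum_succ']

lemma qbinom_one (n : ℕ) : qbinom n 1 = qint n := by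
  induction n with
  | zero => rw [qbinom_eq_zero (by omega)]; rfl
  | succ n ih => rw [qbinom_succ_succ, qbinom_zero_right, ih, qint_succ]; ring

-- second Pascal rule
lemma qbinom_pascal' (n k : ℕ) :
    qbinom (n+1) (k+1) = Polynomial.X ^ (n - k) * qbinom n k + qbinom n (k+1) := by
  induction n generalizing k with
  | zero =>
    cases k with
    | zero => simp [qbinom_succ_succ, qbinom_zero_right, qbinom_eq_zero]
    | succ k => rw [qbinom_eq_zero (by omega), qbinom_eq_zero (by omega), qbinom_eq_zero (by omega)]; ring
  | succ n ih =>
    cases k with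
    | zero =>
      rw [qbinom_succ_succ, qbinom_zero_right, qbinom_one, Nat.sub_zero]
      linear_combination qint_succ' (n+1) - qint_succ (n+1)
    | succ k =>
      rcases le_or_gt (k+1) n with hc | hc
      · obtain ⟨a, ha⟩ : ∃ a, n = k + 1 + a := ⟨n - (k+1), by omega⟩
        subst ha
        have h0 := qbinom_succ_succ (k+1+a+1) (k+1)
        have h1 := ih k
        have h2 := ih (k+1)
        have h4 := qbinom_succ_succ (k+1+a) k
        have h3 := qbinom_succ_succ (k+1+a) (k+1)
        rw [show k+1+a - k = a+1 from by omega] at h1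
        rw [show k+1+a - (k+1) = a from by omega] at h2
        rw [show k+1+a+1 - (k+1) = a+1 from by omega]
        linear_combination h0 + h1 - Polynomial.X^(a+1) * h4 + Polynomial.X^(k+1+1) * h2 - h3
      · rcases le_or_gt (k+1) (n+1) with hc2 | hc2
        · have hnk : n = k := by omega
          subst hnk
          rw [qbinom_self, qbinom_self, qbinom_eq_zero (by omega), show n+1-(n+1) = 0 from by omega]
          ring
        · rw [qbinom_eq_zero (by omega), qbinom_eq_zero (by omega), qbinom_eq_zero (by omega)]
          ring

-- absorption identity
lemma qbinom_absorb (n k : ℕ) :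
    (Polynomial.X ^ (k+1) - 1) * qbinom n (k+1) = (Polynomial.X ^ (n-k) - 1) * qbinom n k := by
  linear_combination qbinom_pascal' n k - qbinom_succ_succ n k

lemma sum_shift (a k : ℕ) : ∑ i ∈ Finset.range k, (a+i+1) = a*k + k + ∑ i ∈ Finset.range k, i := by
  induction k with
  | zero => simp
  | succ k ih => rw [Finset.sum_range_succ, Finset.sum_range_succ, ih]; ring

lemma gauss (p : ℕ) : 2 * (∑ i ∈ Finset.range p, i) + p = p * p := by
  induction p with
  | zero => simp
  | succ p ih => rw [Finset.sum_range_succ]; linear_combination ih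

section Zeta
variable {K : Type*} [Field K] {d : ℕ} {ζ : K}

noncomputable def Bz (ζ : K) (n k : ℕ) : K := Polynomial.aeval ζ (qbinom n k)

lemma Bz_zero_right (n : ℕ) : Bz ζ n 0 = 1 := by simp [Bz, qbinom_zero_right]
lemma Bz_succ_succ (n k : ℕ) : Bz ζ (n+1) (k+1) = Bz ζ n k + ζ^(k+1) * Bz ζ n (k+1) := by
  simp [Bz, qbinom_succ_succ]
lemma Bz_eq_zero {n k : ℕ} (h : n < k) : Bz ζ n k = 0 := by simp [Bz, qbinom_eq_zero h]
lemma Bz_self (n : ℕ) : Bz ζ n n = 1 := by simp [Bz, qbinom_self]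
lemma Bz_absorb (n k : ℕ) :
    (ζ^(k+1) - 1) * Bz ζ n (k+1) = (ζ^(n-k) - 1) * Bz ζ n k := by
  have := congrArg (Polynomial.aeval ζ) (qbinom_absorb n k)
  simpa [Bz] using this

variable (hζ : IsPrimitiveRoot ζ d) (hd : 2 ≤ d)
include hζ hd

lemma zeta_pow_d : ζ ^ d = 1 := hζ.pow_eq_one

lemma zeta_pow_ne_one {i : ℕ} (h0 : 0 < i) (h1 : i < d) : ζ ^ i ≠ 1 :=
  hζ.pow_ne_one_of_pos_of_lt h0.ne' h1

lemma one_sub_zeta_ne {i : ℕ} (h0 : 0 < i) (h1 : i < d) : (1 : K) - ζ ^ i ≠ 0 :=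
  sub_ne_zero.mpr (Ne.symm (zeta_pow_ne_one hζ hd h0 h1))

lemma Bz_prod {n k : ℕ} (hn : n < d) (hk : k ≤ n) :
    Bz ζ n k * ∏ i ∈ Finset.range k, (1 - ζ^(i+1)) =
      ∏ i ∈ Finset.range k, (1 - ζ^(n-k+i+1)) := by
  induction k with
  | zero => simp [Bz_zero_right]
  | succ k ih =>
    obtain ⟨b, hb⟩ : ∃ b, n = k + 1 + b := ⟨n - (k+1), by omega⟩
    subst hb
    have habs := Bz_absorb (ζ := ζ) (k+1+b) k
    rw [show k+1+b - k = b+1 from by omega] at habs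
    have ih' := ih (by omega)
    rw [show k+1+b - k = b+1 from by omega] at ih'
    rw [Finset.prod_range_succ]
    simp only [show ∀ i : ℕ, k+1+b - (k+1) + i + 1 = b + i + 1 from fun i => by omega]
    rw [Finset.prod_range_succ']
    simp only [show ∀ i : ℕ, b + (i+1) + 1 = b+1+i+1 from fun i => by omega,
      show b+0+1 = b+1 from rfl]
    linear_combination (-(∏ i ∈ Finset.range k, (1 - ζ^(i+1)))) * habs + (1 - ζ^(b+1)) * ih'
lemma Bz_ne_zero {n k : ℕ} (hn : n < d) (hk : k ≤ n) : Bz ζ n k ≠ 0 := by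
  have hp := Bz_prod hζ hd hn hk
  have h2 : (∏ i ∈ Finset.range k, (1 - ζ^(n-k+i+1))) ≠ 0 :=
    Finset.prod_ne_zero_iff.mpr fun i hi => one_sub_zeta_ne hζ hd (by omega)
      (by simp only [Finset.mem_range] at hi; omega)
  intro h0
  rw [h0, zero_mul] at hp
  exact h2 hp.symm

lemma Bz_d_eq_zero {k : ℕ} (h0 : 0 < k) (h1 : k < d) : Bz ζ d k = 0 := by
  induction k with
  | zero => omega
  | succ k ih =>
    have habs := Bz_absorb (ζ := ζ) d k
    rcases Nat.eq_zero_or_pos k with hk | hk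
    · subst hk
      rw [Bz_zero_right, show d - 0 = d from by omega, zeta_pow_d hζ hd] at habs
      simp only [sub_self, mul_one] at habs
      have : ζ ^ (0+1) - 1 ≠ 0 := sub_ne_zero.mpr (zeta_pow_ne_one hζ hd (by omega) (by omega))
      exact (mul_eq_zero.mp habs).resolve_left this
    · rw [ih hk (by omega), mul_zero] at habs
      have : ζ ^ (k+1) - 1 ≠ 0 := sub_ne_zero.mpr (zeta_pow_ne_one hζ hd (by omega) (by omega))
      exact (mul_eq_zero.mp habs).resolve_left this

lemma Bz_add_d (n : ℕ) : ∀ k : ℕ, Bz ζ (n+d) k = Bz ζ n k + if d ≤ k then Bz ζ n (k-d) else 0 := by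
  induction n with
  | zero =>
    intro k
    simp only [zero_add]
    rcases lt_trichotomy k d with h | h | h
    · rcases Nat.eq_zero_or_pos k with h0 | h0
      · subst h0; simp [Bz_zero_right, show ¬ (d ≤ 0) from by omega]
      · rw [if_neg (by omega), Bz_d_eq_zero hζ hd h0 h, Bz_eq_zero h0, add_zero]
    · subst h
      rw [if_pos le_rfl, Bz_self, Bz_eq_zero (by omega), Nat.sub_self, Bz_zero_right]
      ring
    · rw [Bz_eq_zero (by omega), if_pos (by omega), Bz_eq_zero (by omega), Bz_eq_zero (by omega)]
      ring
  | succ n ih =>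
    intro k
    cases k with
    | zero => simp [Bz_zero_right, show ¬ (d ≤ 0) from by omega]
    | succ c =>
      rw [show n+1+d = (n+d)+1 from by omega, Bz_succ_succ, ih c, ih (c+1), Bz_succ_succ]
      rcases lt_trichotomy (c+1) d with h | h | h
      · rw [if_neg (by omega), if_neg (by omega), if_neg (by omega)]
        ring
      · rw [if_neg (by omega), if_pos (by omega), if_pos (by omega), ← h]
        rw [Nat.sub_self, show c + 1 = d from h, zeta_pow_d hζ hd, Bz_zero_right, Bz_zero_right]
        ring
      · rw [if_pos (by omega), if_pos (by omega), if_pos (by omega)]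
        have hz : ζ ^ (c+1) = ζ ^ (c+1-d) := by
          have h1 : c+1 = (c+1-d) + d := by omega
          conv_lhs => rw [h1]
          rw [pow_add, zeta_pow_d hζ hd, mul_one]
        rw [show c+1-d = (c-d)+1 from by omega] at hz ⊢
        rw [Bz_succ_succ, hz]
        ring

lemma Bz_lucas {b e : ℕ} (hb : b < d) (he : e < d) (u v : ℕ) :
    Bz ζ (u*d+b) (v*d+e) = (u.choose v : K) * Bz ζ b e := by
  induction u generalizing v with
  | zero =>
    simp only [zero_mul, zero_add]
    cases v with
    | zero => simp
    | succ v =>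
      rw [Bz_eq_zero (show b < (v+1)*d+e from by nlinarith [Nat.zero_le e, Nat.zero_le (v*d)])]
      rw [Nat.choose_eq_zero_of_lt (by omega)]
      ring
  | succ u ih =>
    rw [show (u+1)*d + b = (u*d+b) + d from by ring, Bz_add_d hζ hd]
    cases v with
    | zero =>
      rw [if_neg (by omega), ih 0]
      simp
    | succ v =>
      rw [if_pos (show d ≤ (v+1)*d+e from by nlinarith [Nat.zero_le e, Nat.zero_le (v*d)]),
        show (v+1)*d + e - d = v*d + e from by rw [add_mul, one_mul]; omega, ih (v+1), ih v,
        Nat.choose_succ_succ' u v]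
      push_cast
      ring

lemma Bz_reflect (a k : ℕ) (h : a + k + 1 ≤ d) :
    ζ^(∑ i ∈ Finset.range k, (a+i+1)) * Bz ζ (d-1-a) k = (-1)^k * Bz ζ (a+k) k := by
  have hD : (∏ i ∈ Finset.range k, (1 - ζ^(i+1))) ≠ 0 :=
    Finset.prod_ne_zero_iff.mpr fun i hi => one_sub_zeta_ne hζ hd (by omega)
      (by simp only [Finset.mem_range] at hi; omega)
  apply mul_right_cancel₀ hD
  have hp1 := Bz_prod hζ hd (n := d-1-a) (k := k) (by omega) (by omega)
  have hp2 := Bz_prod hζ hd (n := a+k) (k := k) (by omega) (by omega)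
  calc ζ^(∑ i ∈ Finset.range k, (a+i+1)) * Bz ζ (d-1-a) k * ∏ i ∈ Finset.range k, (1 - ζ^(i+1))
      = ζ^(∑ i ∈ Finset.range k, (a+i+1)) * ∏ i ∈ Finset.range k, (1 - ζ^(d-1-a-k+i+1)) := by
        rw [mul_assoc, hp1]
    _ = ζ^(∑ i ∈ Finset.range k, (a+i+1)) *
          ∏ i ∈ Finset.range k, ((-1) * ζ^(d-(a+k-i)) * (1 - ζ^(a+k-i))) := by
        congr 1
        apply Finset.prod_congr rfl
        intro i hi
        simp only [Finset.mem_range] at hi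
        have h1 : d-1-a-k+i+1 = d-(a+k-i) := by omega
        have h2 : (d-(a+k-i)) + (a+k-i) = d := by omega
        have h3 : ζ^(d-(a+k-i)) * ζ^(a+k-i) = 1 := by
          rw [← pow_add, h2, zeta_pow_d hζ hd]
        rw [h1]
        linear_combination -h3
    _ = ζ^(∑ i ∈ Finset.range k, (a+i+1)) * ((-1)^k * ζ^(∑ i ∈ Finset.range k, (d-(a+k-i))) *
          ∏ i ∈ Finset.range k, (1 - ζ^(a+k-i))) := by
        rw [Finset.prod_mul_distrib, Finset.prod_mul_distrib, Finset.prod_const,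
          Finset.card_range, Finset.prod_pow_eq_pow_sum]
    _ = (-1)^k * (ζ^((∑ i ∈ Finset.range k, (a+i+1)) + (∑ i ∈ Finset.range k, (d-(a+k-i)))) *
          ∏ i ∈ Finset.range k, (1 - ζ^(a+k-i))) := by
        rw [pow_add]; ring
    _ = (-1)^k * ∏ i ∈ Finset.range k, (1 - ζ^(a+k-i)) := by
        have hrefl : (∑ i ∈ Finset.range k, (a+k-i)) = ∑ i ∈ Finset.range k, (a+i+1) := by
          rw [← Finset.sum_range_reflect (fun i => a+i+1) k]
          exact Finset.sum_congr rfl fun i hi => by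
            simp only [Finset.mem_range] at hi; omega
        have he : (∑ i ∈ Finset.range k, (a+i+1)) + (∑ i ∈ Finset.range k, (d-(a+k-i))) = k * d := by
          rw [← hrefl, ← Finset.sum_add_distrib]
          rw [Finset.sum_congr rfl (fun i hi => show (a+k-i) + (d-(a+k-i)) = d from by
            simp only [Finset.mem_range] at hi; omega)]
          simp [Finset.sum_const, Finset.card_range, mul_comm]
        rw [he, pow_mul', zeta_pow_d hζ hd, one_pow, one_mul]
    _ = (-1)^k * Bz ζ (a+k) k * ∏ i ∈ Finset.range k, (1 - ζ^(i+1)) := by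
        rw [mul_assoc, hp2]
        congr 1
        calc ∏ i ∈ Finset.range k, (1 - ζ^(a+k-i))
            = ∏ i ∈ Finset.range k, (1 - ζ^(a+(k-1-i)+1)) := Finset.prod_congr rfl fun i hi => by
              simp only [Finset.mem_range] at hi
              rw [show a+(k-1-i)+1 = a+k-i from by omega]
          _ = ∏ i ∈ Finset.range k, (1 - ζ^(a+i+1)) :=
              Finset.prod_range_reflect (fun i => 1 - ζ^(a+i+1)) k
          _ = ∏ i ∈ Finset.range k, (1 - ζ^(a+k-k+i+1)) := Finset.prod_congr rfl fun i _ => by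
              rw [show a+k-k+i+1 = a+i+1 from by omega]

noncomputable def cz (ζ : K) (k j : ℕ) : K :=
  Bz ζ (k-1) (j-1) * Bz ζ (k+j) j - Bz ζ k j * Bz ζ (k+j) (j-1)

omit hζ hd in
lemma cz_eq_zero_of_lt {k j : ℕ} (hk : 1 ≤ k) (h : k < j) : cz ζ k j = 0 := by
  rw [cz, Bz_eq_zero (show k-1 < j-1 from by omega), Bz_eq_zero h]
  ring

lemma star0 (p c : ℕ) (h : (p+1+c) + (p+1) + 1 ≤ d) :
    ζ^((2*(p+1+c)+1)*(p+1)) * cz ζ (d-1-(p+1+c)) (p+1) = cz ζ (p+1+c) (p+1) := by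
  set s := p+1+c with hs
  -- reflection instances
  have hR1 := Bz_reflect hζ hd (s+1) p (by omega)
  have hR2 := Bz_reflect hζ hd c (p+1) (by omega)
  have hR3 := Bz_reflect hζ hd s (p+1) (by omega)
  have hR4 := Bz_reflect hζ hd c p (by omega)
  rw [show s+1+p = s+p+1 from by omega] at hR1
  rw [show c+(p+1) = s from by omega] at hR2
  rw [show s+(p+1) = s+p+1 from by omega] at hR3
  rw [show c+p = p+c from by omega] at hR4
  -- product formula instances
  have hD1 : (∏ i ∈ Finset.range (p+1), (1 - ζ^(i+1))) ≠ 0 :=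
    Finset.prod_ne_zero_iff.mpr fun i hi => one_sub_zeta_ne hζ hd (by omega)
      (by simp only [Finset.mem_range] at hi; omega)
  have hD2 : (∏ i ∈ Finset.range p, (1 - ζ^(i+1))) ≠ 0 :=
    Finset.prod_ne_zero_iff.mpr fun i hi => one_sub_zeta_ne hζ hd (by omega)
      (by simp only [Finset.mem_range] at hi; omega)
  have hA := Bz_prod hζ hd (n := p+c) (k := p) (by omega) (by omega)
  have hB := Bz_prod hζ hd (n := s+p+1) (k := p+1) (by omega) (by omega)
  have hC := Bz_prod hζ hd (n := s) (k := p+1) (by omega) (by omega)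
  have hE := Bz_prod hζ hd (n := s+p+1) (k := p) (by omega) (by omega)
  simp only [show ∀ i : ℕ, p+c-p+i+1 = c+i+1 from fun i => by omega] at hA
  simp only [show ∀ i : ℕ, s+p+1-(p+1)+i+1 = s+i+1 from fun i => by omega] at hB
  simp only [show ∀ i : ℕ, s-(p+1)+i+1 = c+i+1 from fun i => by omega] at hC
  simp only [show ∀ i : ℕ, s+p+1-p+i+1 = s+1+i+1 from fun i => by omega] at hE
  -- the A/B ratio identity
  have hAB : (Bz ζ (p+c) p * Bz ζ (s+p+1) (p+1)) * (1-ζ^s)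
      = (Bz ζ s (p+1) * Bz ζ (s+p+1) p) * (1-ζ^s*ζ) := by
    apply mul_right_cancel₀ (mul_ne_zero hD2 hD1)
    have e1 : (Bz ζ (p+c) p * Bz ζ (s+p+1) (p+1)) * (1-ζ^s)
        * ((∏ i ∈ Finset.range p, (1 - ζ^(i+1))) * (∏ i ∈ Finset.range (p+1), (1 - ζ^(i+1))))
        = (1-ζ^s) * ((∏ i ∈ Finset.range p, (1 - ζ^(c+i+1)))
            * (∏ i ∈ Finset.range (p+1), (1 - ζ^(s+i+1)))) := by
      linear_combination (1-ζ^s) * (∏ i ∈ Finset.range (p+1), (1 - ζ^(i+1))) * Bz ζ (s+p+1) (p+1) * hA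
        + (1-ζ^s) * (∏ i ∈ Finset.range p, (1 - ζ^(c+i+1))) * hB
    have e2 : (Bz ζ s (p+1) * Bz ζ (s+p+1) p) * (1-ζ^s*ζ)
        * ((∏ i ∈ Finset.range p, (1 - ζ^(i+1))) * (∏ i ∈ Finset.range (p+1), (1 - ζ^(i+1))))
        = (1-ζ^s*ζ) * ((∏ i ∈ Finset.range (p+1), (1 - ζ^(c+i+1)))
            * (∏ i ∈ Finset.range p, (1 - ζ^(s+1+i+1)))) := by
      linear_combination (1-ζ^s*ζ) * (∏ i ∈ Finset.range p, (1 - ζ^(i+1))) * Bz ζ (s+p+1) p * hC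
        + (1-ζ^s*ζ) * (∏ i ∈ Finset.range (p+1), (1 - ζ^(c+i+1))) * hE
    rw [e1, e2]
    rw [Finset.prod_range_succ (fun i => 1 - ζ^(c+i+1)) p,
      Finset.prod_range_succ' (fun i => 1 - ζ^(s+i+1)) p]
    simp only [show ∀ i : ℕ, s+(i+1)+1 = s+1+i+1 from fun i => by omega,
      show c+p+1 = s from by omega, show s+0+1 = s+1 from by omega, pow_succ]
    ring
  -- exponent identities
  have hSid : (∑ i ∈ Finset.range (p+1), (s+i+1)) + (∑ i ∈ Finset.range p, (c+i+1))
      = ((∑ i ∈ Finset.range p, (s+1+i+1)) + (∑ i ∈ Finset.range (p+1), (c+i+1))) + 1 := by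
    rw [sum_shift, sum_shift, sum_shift, sum_shift, hs]
    ring
  have hg := gauss p
  zify at hg
  have hgauss : (2*s+1)*(p+1)
      = s + ((∑ i ∈ Finset.range (p+1), (s+i+1)) + (∑ i ∈ Finset.range p, (c+i+1))) := by
    rw [sum_shift, sum_shift, Finset.sum_range_succ, hs]
    zify
    linear_combination -hg
  -- product equations from reflections
  have h12 : ζ^(∑ i ∈ Finset.range p, (s+1+i+1)) * ζ^(∑ i ∈ Finset.range (p+1), (c+i+1))
      * (Bz ζ (d-1-(s+1)) p * Bz ζ (d-1-c) (p+1))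
      = ((-1)^p * Bz ζ (s+p+1) p) * ((-1)^(p+1) * Bz ζ s (p+1)) := by
    rw [← hR1, ← hR2]; ring
  have h34 : ζ^(∑ i ∈ Finset.range (p+1), (s+i+1)) * ζ^(∑ i ∈ Finset.range p, (c+i+1))
      * (Bz ζ (d-1-s) (p+1) * Bz ζ (d-1-c) p)
      = ((-1)^(p+1) * Bz ζ (s+p+1) (p+1)) * ((-1)^p * Bz ζ (p+c) p) := by
    rw [← hR3, ← hR4]; ring
  have hε : ((-1 : K))^p * ((-1 : K))^p = 1 := by
    rw [← pow_add]
    exact Even.neg_one_pow ⟨p, rfl⟩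
  have h12' : ζ^(∑ i ∈ Finset.range p, (s+1+i+1)) * ζ^(∑ i ∈ Finset.range (p+1), (c+i+1))
      * (Bz ζ (d-1-(s+1)) p * Bz ζ (d-1-c) (p+1))
      = -(Bz ζ (s+p+1) p * Bz ζ s (p+1)) := by
    rw [h12, pow_succ]
    linear_combination (-(Bz ζ (s+p+1) p * Bz ζ s (p+1))) * hε
  have h34' : ζ^(∑ i ∈ Finset.range (p+1), (s+i+1)) * ζ^(∑ i ∈ Finset.range p, (c+i+1))
      * (Bz ζ (d-1-s) (p+1) * Bz ζ (d-1-c) p)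
      = -(Bz ζ (s+p+1) (p+1) * Bz ζ (p+c) p) := by
    rw [h34, pow_succ]
    linear_combination (-(Bz ζ (s+p+1) (p+1) * Bz ζ (p+c) p)) * hε
  have hzz : ζ^(∑ i ∈ Finset.range (p+1), (s+i+1)) * ζ^(∑ i ∈ Finset.range p, (c+i+1))
      = ζ * (ζ^(∑ i ∈ Finset.range p, (s+1+i+1)) * ζ^(∑ i ∈ Finset.range (p+1), (c+i+1))) := by
    rw [← pow_add, ← pow_add, hSid, pow_succ]
    ring
  -- expand the cz's
  have hcz1 : cz ζ (d-1-s) (p+1)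
      = Bz ζ (d-1-(s+1)) p * Bz ζ (d-1-c) (p+1) - Bz ζ (d-1-s) (p+1) * Bz ζ (d-1-c) p := by
    rw [cz, show d-1-s-1 = d-1-(s+1) from by omega, show (p+1)-1 = p from by omega,
      show d-1-s+(p+1) = d-1-c from by omega]
  have hcz2 : cz ζ s (p+1)
      = Bz ζ (p+c) p * Bz ζ (s+p+1) (p+1) - Bz ζ s (p+1) * Bz ζ (s+p+1) p := by
    rw [cz, show s-1 = p+c from by omega, show (p+1)-1 = p from by omega,
      show s+(p+1) = s+p+1 from by omega]
  rw [hcz1, hcz2, hgauss]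
  rw [pow_add, pow_add]
  linear_combination (ζ^s * (Bz ζ (d-1-(s+1)) p * Bz ζ (d-1-c) (p+1))) * hzz
    + (ζ^s * ζ) * h12' - (ζ^s) * h34' - hAB

lemma cz_nocarry (u v σ t : ℕ) (hσ1 : 1 ≤ σ) (ht1 : 1 ≤ t) (hst : σ + t ≤ d-1) :
    cz ζ (u*d+σ) (v*d+t) = (u.choose v : K) * ((u+v).choose v : K) * cz ζ σ t := by
  have hkj : u*d+σ+(v*d+t) = (u+v)*d+(σ+t) := by ring_nf
  rw [cz, cz, show u*d+σ-1 = u*d+(σ-1) from by omega, show v*d+t-1 = v*d+(t-1) from by omega,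
    hkj, Bz_lucas hζ hd (show σ-1 < d from by omega) (show t-1 < d from by omega) u v,
    Bz_lucas hζ hd (show σ+t < d from by omega) (show t < d from by omega) (u+v) v,
    Bz_lucas hζ hd (show σ < d from by omega) (show t < d from by omega) u v,
    Bz_lucas hζ hd (show σ+t < d from by omega) (show t-1 < d from by omega) (u+v) v]
  ring

lemma cz_carry (u v σ t : ℕ) (hσ1 : 1 ≤ σ) (hσ2 : σ ≤ d-2) (ht1 : 1 ≤ t) (htd : t ≤ d-1)
    (hc : d ≤ σ + t) : cz ζ (u*d+σ) (v*d+t) = 0 := by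
  have hkj : u*d+σ+(v*d+t) = (u+v+1)*d+(σ+t-d) := by
    have h1 : (u+v+1)*d = (u+v)*d + d := by ring
    have h2 : u*d+σ+(v*d+t) = (u+v)*d+(σ+t) := by ring_nf
    omega
  rw [cz, show v*d+t-1 = v*d+(t-1) from by omega, hkj,
    Bz_lucas hζ hd (show σ+t-d < d from by omega) (show t < d from by omega) (u+v+1) v,
    Bz_lucas hζ hd (show σ+t-d < d from by omega) (show t-1 < d from by omega) (u+v+1) v,
    Bz_eq_zero (show σ+t-d < t from by omega), Bz_eq_zero (show σ+t-d < t-1 from by omega)]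
  ring

lemma cz_tzero (u v σ : ℕ) (hσ1 : 1 ≤ σ) (hσ2 : σ ≤ d-2) (hv : 1 ≤ v) :
    cz ζ (u*d+σ) (v*d) = 0 := by
  have hj1 : v*d - 1 = (v-1)*d + (d-1) := by
    have h1 : v*d = (v-1)*d + d := by
      have : (v-1)+1 = v := by omega
      calc v*d = ((v-1)+1)*d := by rw [this]
        _ = (v-1)*d + d := by ring
    omega
  have hkj : u*d+σ+(v*d) = (u+v)*d+σ := by ring_nf
  rw [cz, show u*d+σ-1 = u*d+(σ-1) from by omega, hj1, hkj,
    Bz_lucas hζ hd (show σ-1 < d from by omega) (show d-1 < d from by omega) u (v-1),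
    Bz_lucas hζ hd (show σ < d from by omega) (show d-1 < d from by omega) (u+v) (v-1),
    Bz_eq_zero (show σ-1 < d-1 from by omega), Bz_eq_zero (show σ < d-1 from by omega)]
  ring

lemma star (u s j : ℕ) (hs1 : 1 ≤ s) (hs2 : s ≤ d-2) (hj : 1 ≤ j) :
    ζ^((2*s+1)*j) * cz ζ (u*d+(d-1-s)) j = cz ζ (u*d+s) j := by
  have hd0 : 0 < d := by omega
  obtain ⟨v, t, hj', htd⟩ : ∃ v t, j = v*d + t ∧ t < d :=
    ⟨j / d, j % d, (Nat.div_add_mod' j d).symm, Nat.mod_lt _ hd0⟩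
  subst hj'
  have hs1' : 1 ≤ d-1-s := by omega
  have hs2' : d-1-s ≤ d-2 := by omega
  rcases Nat.eq_zero_or_pos t with ht0 | ht1
  · subst ht0
    have hv : 1 ≤ v := by
      rcases Nat.eq_zero_or_pos v with h0 | h0
      · subst h0; simp at hj
      · exact h0
    rw [show v*d+0 = v*d from by omega, cz_tzero hζ hd u v s hs1 hs2 hv,
      cz_tzero hζ hd u v (d-1-s) hs1' hs2' hv]
    ring
  · -- t ≥ 1
    rcases le_or_gt (s+t) (d-1) with hnc | hcar
    · rcases le_or_gt t s with hts | hst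
      · -- main case: star0
        rw [cz_nocarry hζ hd u v s t hs1 ht1 hnc,
          cz_nocarry hζ hd u v (d-1-s) t hs1' ht1 (show (d-1-s) + t ≤ d-1 from by omega)]
        have hst0 := star0 hζ hd (t-1) (s-t) (show ((t-1)+1+(s-t)) + ((t-1)+1) + 1 ≤ d from by omega)
        rw [show (t-1)+1+(s-t) = s from by omega, show (t-1)+1 = t from by omega] at hst0
        have hpow : ζ^((2*s+1)*(v*d+t)) = ζ^((2*s+1)*t) := by
          rw [show (2*s+1)*(v*d+t) = (2*s+1)*t + d*((2*s+1)*v) from by ring, pow_add,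
            pow_mul ζ d ((2*s+1)*v), zeta_pow_d hζ hd, one_pow, mul_one]
        rw [hpow]
        linear_combination ((u.choose v : K) * ((u+v).choose v : K)) * hst0
      · -- t > s : both sides vanish
        rw [cz_nocarry hζ hd u v s t hs1 ht1 hnc, cz_eq_zero_of_lt hs1 hst,
          cz_carry hζ hd u v (d-1-s) t hs1' hs2' ht1 (by omega) (show d ≤ (d-1-s)+t from by omega)]
        ring
    · -- s + t ≥ d : k-side carry
      rcases le_or_gt t s with hts | hst
      · -- t ≤ s : k' side no carry, cz (d-1-s) t = 0 since t > d-1-s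
        rw [cz_carry hζ hd u v s t hs1 hs2 ht1 (by omega) (by omega),
          cz_nocarry hζ hd u v (d-1-s) t hs1' ht1 (show (d-1-s)+t ≤ d-1 from by omega),
          cz_eq_zero_of_lt hs1' (show d-1-s < t from by omega)]
        ring
      · -- t > s : both carry
        rw [cz_carry hζ hd u v s t hs1 hs2 ht1 (by omega) (by omega),
          cz_carry hζ hd u v (d-1-s) t hs1' hs2' ht1 (by omega) (show d ≤ (d-1-s)+t from by omega)]
        ring

lemma zeta_ne_zero' : ζ ≠ 0 := fun h0 => by
  have h1 := hζ.pow_eq_one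
  rw [h0, zero_pow (show d ≠ 0 from by omega)] at h1
  exact zero_ne_one h1

lemma zp_congr {e f : ℤ} (h : (d:ℤ) ∣ e - f) : ζ^e = ζ^f := by
  obtain ⟨c, hc⟩ := h
  have hz0 : ζ ≠ 0 := zeta_ne_zero' hζ hd
  have h1 : ζ^(e-f) = 1 := by
    rw [hc, zpow_mul, zpow_natCast, zeta_pow_d hζ hd, one_zpow]
  calc ζ^e = ζ^(f + (e-f)) := by ring_nf
    _ = ζ^f * ζ^(e-f) := zpow_add₀ hz0 _ _
    _ = ζ^f := by rw [h1, mul_one]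

noncomputable def fz (ζ : K) (N : ℕ) : K := ∑ i ∈ Finset.range N, ζ^i

omit hζ hd in
lemma fz_mul (N : ℕ) : fz ζ N * (ζ - 1) = ζ^N - 1 := geom_sum_mul ζ N

omit hd in
lemma zeta_ne_one (hd : 2 ≤ d) : ζ ≠ 1 := by
  have := zeta_pow_ne_one hζ hd (i := 1) one_pos (by omega)
  simpa using this

lemma fz_eq_zero {N : ℕ} (h : d ∣ N) : fz ζ N = 0 := by
  obtain ⟨c, hc⟩ := h
  have h1 : fz ζ N * (ζ - 1) = 0 := by
    rw [fz_mul, hc, pow_mul, zeta_pow_d hζ hd, one_pow, sub_self]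
  exact (mul_eq_zero.mp h1).resolve_right
    (sub_ne_zero.mpr (zeta_ne_one hζ hd))

lemma fz_pair {M N : ℕ} (h : ζ^M = ζ^N) : fz ζ M = fz ζ N := by
  have h1 : (fz ζ M - fz ζ N) * (ζ - 1) = 0 := by
    rw [sub_mul, fz_mul, fz_mul, h, sub_self]
  have := (mul_eq_zero.mp h1).resolve_right (sub_ne_zero.mpr (zeta_ne_one hζ hd))
  exact sub_eq_zero.mp this

lemma zeta_pow_natmod (N : ℕ) : (ζ:K)^N = ζ^(N % d) := by
  conv_lhs => rw [← Nat.div_add_mod N d]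
  rw [pow_add, pow_mul, zeta_pow_d hζ hd, one_pow, one_mul]

end Zeta

section Main
variable {K : Type*} [Field K] [CharZero K] {d : ℕ} {ζ : K}
variable (hζ : IsPrimitiveRoot ζ d) (hd : 2 ≤ d)

/-- image of `qw` in `K[X]` -/
noncomputable def Wz (ζ : K) (α k : ℕ) : Polynomial K :=
  ∑ j ∈ Finset.Icc 1 k,
    Polynomial.C (ζ^((α : ℤ) * (((j + 1).choose 2 : ℤ) - ((k : ℤ) + 1) * ((j : ℤ) - 1))) *
      (cz ζ k j)^α) * Polynomial.X ^ (j - 1)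

/-- image of one term of the main sum in `K[X]` -/
noncomputable def termK (ζ : K) (α m r n k : ℕ) : Polynomial K :=
  Polynomial.C ((fz ζ (k*(k+1)))^r * fz ζ (2*k+1) *
      ζ^((((n:ℤ) - 1 - (k:ℤ))) * ((α:ℤ)*(m:ℤ)+1))) * (Wz ζ α k)^m

include hζ hd

lemma Wz_extend (α k M : ℕ) (hk : 1 ≤ k) (hM : k ≤ M) (hα : 1 ≤ α) :
    Wz ζ α k = ∑ j ∈ Finset.Icc 1 M,
      Polynomial.C (ζ^((α : ℤ) * (((j + 1).choose 2 : ℤ) - ((k : ℤ) + 1) * ((j : ℤ) - 1))) *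
        (cz ζ k j)^α) * Polynomial.X ^ (j - 1) := by
  rw [Wz]
  apply Finset.sum_subset
  · intro j hj; simp only [Finset.mem_Icc] at hj ⊢; omega
  · intro j hj hj2
    simp only [Finset.mem_Icc] at hj hj2
    rw [cz_eq_zero_of_lt hk (by omega), zero_pow (by omega), mul_zero, Polynomial.C_0, zero_mul]

lemma Wz_pair (α u s : ℕ) (hs1 : 1 ≤ s) (hs2 : s ≤ d-2) (hα : 1 ≤ α) :
    Wz ζ α (u*d+(d-1-s)) = Polynomial.C (ζ^(-((α:ℤ)*(2*(s:ℤ)+1)))) * Wz ζ α (u*d+s) := by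
  have hz0 : ζ ≠ 0 := zeta_ne_zero' hζ hd
  have hk : 1 ≤ u*d+s := by omega
  have hk' : 1 ≤ u*d+(d-1-s) := by omega
  rw [Wz_extend hζ hd α (u*d+(d-1-s)) (u*d+d) hk' (by omega) hα,
    Wz_extend hζ hd α (u*d+s) (u*d+d) hk (by omega) hα, Finset.mul_sum]
  apply Finset.sum_congr rfl
  intro j hj
  simp only [Finset.mem_Icc] at hj
  have hj1 : 1 ≤ j := hj.1
  have hstar := star hζ hd u s j hs1 hs2 hj1
  have hp : ζ^((2*s+1)*j*α) * (cz ζ (u*d+(d-1-s)) j)^α = (cz ζ (u*d+s) j)^α := by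
    rw [pow_mul, ← mul_pow, hstar]
  have hcast1 : ((u*d+(d-1-s) : ℕ) : ℤ) = (u:ℤ)*(d:ℤ) + (d:ℤ) - 1 - (s:ℤ) := by
    push_cast [show (d:ℕ)-1-s = d-(1+s) from by omega]
    omega
  have hcast2 : ((u*d+s : ℕ) : ℤ) = (u:ℤ)*(d:ℤ) + (s:ℤ) := by push_cast; ring
  have hzc : ζ^((α : ℤ) * (((j + 1).choose 2 : ℤ) - (((u*d+(d-1-s) : ℕ) : ℤ) + 1) * ((j : ℤ) - 1)))
      = ζ^(-((α:ℤ)*(2*(s:ℤ)+1)) + (α : ℤ) * (((j + 1).choose 2 : ℤ) - (((u*d+s : ℕ) : ℤ) + 1) * ((j : ℤ) - 1)) + ((2*s+1)*j*α : ℕ)) := by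
    apply zp_congr hζ hd
    refine ⟨-(α:ℤ)*((j:ℤ)-1), ?_⟩
    rw [hcast1, hcast2]
    push_cast
    ring
  have hsc : ζ^((α : ℤ) * (((j + 1).choose 2 : ℤ) - (((u*d+(d-1-s) : ℕ) : ℤ) + 1) * ((j : ℤ) - 1)))
        * (cz ζ (u*d+(d-1-s)) j)^α
      = ζ^(-((α:ℤ)*(2*(s:ℤ)+1))) *
        (ζ^((α : ℤ) * (((j + 1).choose 2 : ℤ) - (((u*d+s : ℕ) : ℤ) + 1) * ((j : ℤ) - 1))) *
          (cz ζ (u*d+s) j)^α) := by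
    rw [hzc, zpow_add₀ hz0, zpow_add₀ hz0, zpow_natCast]
    linear_combination (ζ^(-((α:ℤ)*(2*(s:ℤ)+1))) *
      ζ^((α : ℤ) * (((j + 1).choose 2 : ℤ) - (((u*d+s : ℕ) : ℤ) + 1) * ((j : ℤ) - 1)))) * hp
  rw [hsc, Polynomial.C_mul, mul_assoc]

lemma term_zero (α m r n k : ℕ) (hr : 1 ≤ r) (h : d ∣ k*(k+1)) :
    termK ζ α m r n k = 0 := by
  rw [termK, fz_eq_zero hζ hd h, zero_pow (by omega), zero_mul, zero_mul,
    Polynomial.C_0, zero_mul]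

lemma term_pair (α m r n u s : ℕ) (hs1 : 1 ≤ s) (hs2 : s ≤ d-2) (hα : 1 ≤ α) (hm : 1 ≤ m) :
    termK ζ α m r n (u*d+(d-1-s)) = - termK ζ α m r n (u*d+s) := by
  have hz0 : ζ ≠ 0 := zeta_ne_zero' hζ hd
  have hcast1 : ((u*d+(d-1-s) : ℕ) : ℤ) = (u:ℤ)*(d:ℤ) + (d:ℤ) - 1 - (s:ℤ) := by
    push_cast [show (d:ℕ)-1-s = d-(1+s) from by omega]
    omega
  have hcast2 : ((u*d+s : ℕ) : ℤ) = (u:ℤ)*(d:ℤ) + (s:ℤ) := by push_cast; ring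
  have ha : fz ζ ((u*d+(d-1-s))*((u*d+(d-1-s))+1)) = fz ζ ((u*d+s)*((u*d+s)+1)) := by
    apply fz_pair hζ hd
    rw [← zpow_natCast ζ ((u*d+(d-1-s))*((u*d+(d-1-s))+1)), ← zpow_natCast ζ ((u*d+s)*((u*d+s)+1))]
    refine zp_congr hζ hd ⟨((d:ℤ)-1-2*(s:ℤ))*(2*(u:ℤ)+1), ?_⟩
    push_cast [hcast1, hcast2]
    ring
  have hb : fz ζ (2*(u*d+(d-1-s))+1) = - ζ^(-(2*(s:ℤ)+1)) * fz ζ (2*(u*d+s)+1) := by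
    have h4 : ζ^(-(2*(s:ℤ)+1)) * ζ^((2*(u*d+s)+1 : ℕ) : ℤ) = 1 := by
      rw [← zpow_add₀ hz0]
      have he : -(2*(s:ℤ)+1) + ((2*(u*d+s)+1 : ℕ) : ℤ) = (d:ℤ) * (2*u) := by
        push_cast [hcast2]; ring
      rw [he, zpow_mul, zpow_natCast, zeta_pow_d hζ hd, one_zpow]
    have h3 : ζ^(2*(u*d+(d-1-s))+1) = ζ^(-(2*(s:ℤ)+1)) := by
      rw [← zpow_natCast ζ (2*(u*d+(d-1-s))+1)]
      apply zp_congr hζ hd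
      refine ⟨2*(u:ℤ)+2, ?_⟩
      push_cast [hcast1]
      ring
    have h1 : (fz ζ (2*(u*d+(d-1-s))+1) - (- ζ^(-(2*(s:ℤ)+1)) * fz ζ (2*(u*d+s)+1))) * (ζ - 1) = 0 := by
      rw [sub_mul, fz_mul]
      have h2 : (- ζ^(-(2*(s:ℤ)+1)) * fz ζ (2*(u*d+s)+1)) * (ζ-1)
          = - ζ^(-(2*(s:ℤ)+1)) * (ζ^(2*(u*d+s)+1) - 1) := by
        rw [mul_assoc, fz_mul]
      rw [h2, h3, show ζ^(2*(u*d+s)+1) = ζ^((2*(u*d+s)+1 : ℕ) : ℤ) from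
        (zpow_natCast ζ (2*(u*d+s)+1)).symm]
      linear_combination h4
    have := (mul_eq_zero.mp h1).resolve_right (sub_ne_zero.mpr (zeta_ne_one hζ hd))
    exact sub_eq_zero.mp this
  have hc : ζ^((((n:ℤ) - 1 - ((u*d+(d-1-s) : ℕ):ℤ))) * ((α:ℤ)*(m:ℤ)+1))
      = ζ^((2*(s:ℤ)+1) * ((α:ℤ)*(m:ℤ)+1)) * ζ^((((n:ℤ) - 1 - ((u*d+s : ℕ):ℤ))) * ((α:ℤ)*(m:ℤ)+1)) := by
    rw [← zpow_add₀ hz0]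
    apply zp_congr hζ hd
    refine ⟨-((α:ℤ)*(m:ℤ)+1), ?_⟩
    rw [hcast1, hcast2]
    ring
  have hcomb : ζ^((2*(s:ℤ)+1) * ((α:ℤ)*(m:ℤ)+1)) * ζ^(-((α:ℤ)*(2*(s:ℤ)+1)) * (m:ℤ))
      * ζ^(-(2*(s:ℤ)+1)) = 1 := by
    rw [← zpow_add₀ hz0, ← zpow_add₀ hz0,
      show (2*(s:ℤ)+1) * ((α:ℤ)*(m:ℤ)+1) + (-((α:ℤ)*(2*(s:ℤ)+1)) * (m:ℤ)) + (-(2*(s:ℤ)+1)) = 0 from by ring,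
      zpow_zero]
  have hS : (fz ζ ((u*d+(d-1-s))*((u*d+(d-1-s))+1)))^r * fz ζ (2*(u*d+(d-1-s))+1) *
        ζ^((((n:ℤ) - 1 - ((u*d+(d-1-s) : ℕ):ℤ))) * ((α:ℤ)*(m:ℤ)+1)) * (ζ^(-((α:ℤ)*(2*(s:ℤ)+1))))^m
      = -((fz ζ ((u*d+s)*((u*d+s)+1)))^r * fz ζ (2*(u*d+s)+1) *
        ζ^((((n:ℤ) - 1 - ((u*d+s : ℕ):ℤ))) * ((α:ℤ)*(m:ℤ)+1))) := by
    rw [ha, hb, hc, ← zpow_natCast (ζ^(-((α:ℤ)*(2*(s:ℤ)+1)))) m, ← zpow_mul]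
    linear_combination (-((fz ζ ((u*d+s)*((u*d+s)+1)))^r * fz ζ (2*(u*d+s)+1) *
      ζ^((((n:ℤ) - 1 - ((u*d+s : ℕ):ℤ))) * ((α:ℤ)*(m:ℤ)+1)))) * hcomb
  calc termK ζ α m r n (u*d+(d-1-s))
      = Polynomial.C ((fz ζ ((u*d+(d-1-s))*((u*d+(d-1-s))+1)))^r * fz ζ (2*(u*d+(d-1-s))+1) *
          ζ^((((n:ℤ) - 1 - ((u*d+(d-1-s) : ℕ):ℤ))) * ((α:ℤ)*(m:ℤ)+1)) *
          (ζ^(-((α:ℤ)*(2*(s:ℤ)+1))))^m) * (Wz ζ α (u*d+s))^m := by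
        rw [termK, Wz_pair hζ hd α u s hs1 hs2 hα, mul_pow, ← Polynomial.C_pow]
        simp only [map_mul]
        ring
    _ = - termK ζ α m r n (u*d+s) := by
        rw [hS, termK, Polynomial.C_neg, neg_mul]

lemma block_pair (α m r n u i : ℕ) (hi : i < d) (hα : 1 ≤ α) (hm : 1 ≤ m) (hr : 1 ≤ r) :
    termK ζ α m r n (u*d+i) + termK ζ α m r n (u*d+(d-1-i)) = 0 := by
  have hdd : d ∣ (u*d+(d-1))*((u*d+(d-1))+1) := by
    have he : (u*d+(d-1))+1 = u*d+d := by
      generalize u*d = w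
      omega
    exact ⟨(u*d+(d-1))*(u+1), by rw [he]; ring⟩
  have h00 : d ∣ (u*d+0)*((u*d+0)+1) := ⟨u*(u*d+1), by ring⟩
  rcases Nat.eq_zero_or_pos i with h0 | h1
  · subst h0
    rw [term_zero hζ hd α m r n _ hr h00, show d-1-0 = d-1 from by omega,
      term_zero hζ hd α m r n _ hr hdd, add_zero]
  · rcases le_or_gt i (d-2) with h2 | h2
    · rw [term_pair hζ hd α m r n u i h1 h2 hα hm]
      ring
    · have hieq : i = d-1 := by omega
      subst hieq
      rw [term_zero hζ hd α m r n _ hr hdd, show d-1-(d-1) = 0 from by omega,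
        term_zero hζ hd α m r n _ hr h00, add_zero]

lemma block_sum (α m r n u : ℕ) (hα : 1 ≤ α) (hm : 1 ≤ m) (hr : 1 ≤ r) :
    ∑ i ∈ Finset.range d, termK ζ α m r n (u*d+i) = 0 := by
  apply Finset.sum_involution (g := fun i _ => d-1-i)
  · intro i hi
    exact block_pair hζ hd α m r n u i (Finset.mem_range.mp hi) hα hm hr
  · intro i hi hf hgi
    have hpair := block_pair hζ hd α m r n u i (Finset.mem_range.mp hi) hα hm hr
    rw [hgi] at hpair
    apply hf
    have h2 : (2 : K) ≠ 0 := two_ne_zero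
    have : (2 : Polynomial K) * termK ζ α m r n (u*d+i) = 0 := by
      linear_combination hpair
    rcases mul_eq_zero.mp this with h | h
    · exact absurd h two_ne_zero
    · exact h
  · intro i hi
    simp only [Finset.mem_range] at hi ⊢
    omega
  · intro i hi
    simp only [Finset.mem_range] at hi
    omega

lemma key_sum_aux (α m r n : ℕ) (hα : 1 ≤ α) (hm : 1 ≤ m) (hr : 1 ≤ r) (e : ℕ) :
    ∑ k ∈ Finset.range (d*e), termK ζ α m r n k = 0 := by
  induction e with
  | zero => simp
  | succ e ih =>
    rw [show d*(e+1) = d*e + d from by ring, Finset.sum_range_add, ih, zero_add]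
    calc ∑ i ∈ Finset.range d, termK ζ α m r n (d*e+i)
        = ∑ i ∈ Finset.range d, termK ζ α m r n (e*d+i) :=
          Finset.sum_congr rfl fun i _ => by rw [Nat.mul_comm d e]
      _ = 0 := block_sum hζ hd α m r n e hα hm hr

lemma key_sum (α m r n : ℕ) (hα : 1 ≤ α) (hm : 1 ≤ m) (hr : 1 ≤ r) (hn : d ∣ n) :
    ∑ k ∈ Finset.range n, termK ζ α m r n k = 0 := by
  obtain ⟨e, rfl⟩ := hn
  exact key_sum_aux hζ hd α m r (d*e) hα hm hr e

end Main

section Transfer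

open LaurentPolynomial

/-- Evaluation of integer Laurent polynomials at a unit. -/
noncomputable def laurentEval {K : Type*} [CommRing K] (u : Kˣ) :
    LaurentPolynomial ℤ →ₐ[ℤ] K :=
  AddMonoidAlgebra.lift ℤ K ℤ ((Units.coeHom K).comp (zpowersHom Kˣ u))

lemma laurentEval_T {K : Type*} [CommRing K] (u : Kˣ) (e : ℤ) :
    laurentEval u (T e) = ((u^e : Kˣ) : K) := by
  have h : (T e : LaurentPolynomial ℤ) = AddMonoidAlgebra.single e 1 := rfl
  rw [laurentEval, h, AddMonoidAlgebra.lift_single]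
  simp

lemma laurentEval_toLaurent {K : Type*} [CommRing K] (u : Kˣ) (p : Polynomial ℤ) :
    laurentEval u (p.toLaurent) = Polynomial.aeval (u : K) p := by
  have h : (laurentEval u).comp Polynomial.toLaurentAlg = Polynomial.aeval (u : K) := by
    apply Polynomial.algHom_ext
    rw [AlgHom.comp_apply, Polynomial.toLaurentAlg_apply, Polynomial.toLaurent_X,
      laurentEval_T, Polynomial.aeval_X, zpow_one]
  calc laurentEval u (p.toLaurent) = ((laurentEval u).comp Polynomial.toLaurentAlg) p := rfl
    _ = Polynomial.aeval (u : K) p := by rw [h]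

lemma dvd_of_eval_zero {K : Type*} [Field K] [CharZero K] {d : ℕ} {ζ : K}
    (hζ : IsPrimitiveRoot ζ d) (hd : 2 ≤ d) (u : Kˣ) (hu : (u : K) = ζ)
    {L : LaurentPolynomial ℤ} (hL : laurentEval u L = 0) :
    (Polynomial.cyclotomic d ℤ).toLaurent ∣ L := by
  obtain ⟨N, p, hp⟩ := L.exists_T_pow
  have hev : Polynomial.aeval ζ p = 0 := by
    rw [← hu, ← laurentEval_toLaurent u p, hp, map_mul, hL, zero_mul]
  have h1 : Polynomial.cyclotomic d ℚ ∣ p.map (Int.castRingHom ℚ) := by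
    rw [Polynomial.cyclotomic_eq_minpoly_rat hζ (by omega)]
    apply minpoly.dvd
    rw [Polynomial.aeval_def, Polynomial.eval₂_map]
    rw [Polynomial.aeval_def] at hev
    convert hev using 2
    · rfl
    · rfl
    exact RingHom.ext fun x => by simp
  have h2 : Polynomial.cyclotomic d ℤ ∣ p := by
    rw [← Polynomial.map_cyclotomic_int d ℚ] at h1
    exact (Polynomial.map_dvd_map (Int.castRingHom ℚ) Int.cast_injective
      (Polynomial.cyclotomic.monic d ℤ)).mp h1
  have h3 : (Polynomial.cyclotomic d ℤ).toLaurent ∣ p.toLaurent := map_dvd Polynomial.toLaurent h2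
  rw [hp] at h3
  exact (LaurentPolynomial.isUnit_T N).dvd_mul_right.mp h3

end Transfer

section Final

open LaurentPolynomial

variable {K : Type*} [Field K] [CharZero K] {d : ℕ} {ζ : K}

lemma aeval_qint (ζ : K) (N : ℕ) : Polynomial.aeval ζ (qint N) = fz ζ N := by
  rw [qint, fz, map_sum]
  exact Finset.sum_congr rfl fun i _ => by rw [map_pow, Polynomial.aeval_X]

lemma aeval_qwCoeff (ζ : K) (k j : ℕ) : Polynomial.aeval ζ (qwCoeff k j) = cz ζ k j := by
  rw [qwCoeff, map_sub, map_mul, map_mul]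
  rfl

variable {u : Kˣ} (hu : (u : K) = ζ)
include hu

lemma laurentEval_qintL (N : ℕ) : laurentEval u (qintL N) = fz ζ N := by
  rw [qintL, laurentEval_toLaurent, hu, aeval_qint]

lemma laurentEval_T_zpow (e : ℤ) : laurentEval u (T e) = ζ^e := by
  rw [laurentEval_T, Units.val_zpow_eq_zpow_val, hu]

lemma map_qw (α k : ℕ) :
    (qw α k).map (laurentEval u).toRingHom = Wz ζ α k := by
  rw [qw, Wz, Polynomial.map_sum]
  refine Finset.sum_congr rfl fun j hj => ?_
  rw [Polynomial.map_mul, Polynomial.map_pow, Polynomial.map_X, Polynomial.map_C]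
  congr 1
  simp only [AlgHom.toRingHom_eq_coe, RingHom.coe_coe]
  rw [map_mul, map_pow, laurentEval_T_zpow hu, laurentEval_toLaurent, hu, aeval_qwCoeff]

lemma map_term (α m r n k : ℕ) :
    (Polynomial.C ((qintL (k * (k + 1))) ^ r * qintL (2 * k + 1) *
        LaurentPolynomial.T (((n : ℤ) - 1 - k) * (α * m + 1))) *
      (qw α k) ^ m).map (laurentEval u).toRingHom = termK ζ α m r n k := by
  rw [Polynomial.map_mul, Polynomial.map_pow, Polynomial.map_C, map_qw hu, termK]
  congr 2
  simp only [AlgHom.toRingHom_eq_coe, RingHom.coe_coe]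
  rw [map_mul, map_mul, map_pow, laurentEval_qintL hu, laurentEval_qintL hu,
    laurentEval_T_zpow hu]

end Final

set_option synthInstance.maxHeartbeats 1000000 in
lemma exists_primitive_root_charZero (d : ℕ) (hd : 2 ≤ d) :
    ∃ (K : Type) (_ : Field K) (_ : CharZero K) (ζ : K), IsPrimitiveRoot ζ d := by
  have hpos : 0 < d := by omega
  haveI : NeZero d := ⟨by omega⟩
  haveI : NeZero ((d : ℚ)) := ⟨by exact_mod_cast hpos.ne'⟩
  have hc : IsCyclotomicExtension {d} ℚ (CyclotomicField d ℚ) := CyclotomicField.isCyclotomicExtension d ℚ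
  exact ⟨CyclotomicField d ℚ, inferInstance, inferInstance,
    IsCyclotomicExtension.zeta d ℚ _,
    IsCyclotomicExtension.zeta_spec d ℚ _⟩

theorem cyclotomic_dvd_sum (α m n r d : ℕ) (hα : 1 ≤ α) (hm : 1 ≤ m) (hn : 1 ≤ n) (hr : 1 ≤ r)
    (hd : 1 < d) (hdn : d ∣ n) :
    (Polynomial.C ((Polynomial.cyclotomic d ℤ).toLaurent) : Polynomial (LaurentPolynomial ℤ)) ∣
      ∑ k ∈ Finset.range n,
        Polynomial.C ((qintL (k * (k + 1))) ^ r * qintL (2 * k + 1) *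
            LaurentPolynomial.T (((n : ℤ) - 1 - k) * (α * m + 1))) *
          (qw α k) ^ m := by
  have hd2 : 2 ≤ d := hd
  obtain ⟨K, _, _, ζ, hζ⟩ := exists_primitive_root_charZero d hd2
  have hunit : IsUnit ζ := hζ.isUnit (by omega)
  set u : Kˣ := hunit.unit with hudef
  have hu : (u : K) = ζ := hunit.unit_spec
  rw [Polynomial.C_dvd_iff_dvd_coeff]
  intro i
  apply dvd_of_eval_zero hζ hd2 u hu
  have hmap : (∑ k ∈ Finset.range n,
      Polynomial.C ((qintL (k * (k + 1))) ^ r * qintL (2 * k + 1) *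
          LaurentPolynomial.T (((n : ℤ) - 1 - k) * (α * m + 1))) *
        (qw α k) ^ m).map (laurentEval u).toRingHom = 0 := by
    rw [← Polynomial.coe_mapRingHom, map_sum]
    calc ∑ k ∈ Finset.range n, Polynomial.mapRingHom (laurentEval u).toRingHom
          (Polynomial.C ((qintL (k * (k + 1))) ^ r * qintL (2 * k + 1) *
            LaurentPolynomial.T (((n : ℤ) - 1 - k) * (α * m + 1))) * (qw α k) ^ m)
        = ∑ k ∈ Finset.range n, termK ζ α m r n k :=
          Finset.sum_congr rfl fun k _ => by
            rw [Polynomial.coe_mapRingHom]; exact map_term hu α m r n k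
      _ = 0 := key_sum hζ hd2 α m r n hα hm hr hdn
  have hc : laurentEval u ((∑ k ∈ Finset.range n,
      Polynomial.C ((qintL (k * (k + 1))) ^ r * qintL (2 * k + 1) *
          LaurentPolynomial.T (((n : ℤ) - 1 - k) * (α * m + 1))) *
        (qw α k) ^ m).coeff i)
      = ((∑ k ∈ Finset.range n,
      Polynomial.C ((qintL (k * (k + 1))) ^ r * qintL (2 * k + 1) *
          LaurentPolynomial.T (((n : ℤ) - 1 - k) * (α * m + 1))) *
        (qw α k) ^ m).map (laurentEval u).toRingHom).coeff i :=
    (Polynomial.coeff_map _ _).symm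
  rw [hc, hmap, Polynomial.coeff_zero]
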